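/- Let d ≥ 1, let s ∈ ℝ with 0 ≤ s < 1/2 and set q = 1/(1 − 2s) (so q ≥ 1), and let φ(x) = π^{−d/4} e^{−|x|²/2}. Then there exists a constant c > 0, depending only on d and s, such that for every r > 0 there is a constant C_r > 0 with the following property: for every Schwartz function f : ℝ^d → ℂ and every B ≥ 0 such that |V_φ f(x,ξ)| ≤ B·e^{−(|x|²+|ξ|²)/4}·e^{r(log(1+ (|x|²+|ξ|²)^{1/2}))^q} for all x, ξ ∈ ℝ^d, one has |f(x)| ≤ C_r·B·e^{−|x|²/2}·e^{c·r·(log(1+|x|))^q} for all x ∈ ℝ^d. -/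

import Mathlib

open MeasureTheory Complex
open scoped RealInnerProductSpace FourierTransform

/-- The short-time Fourier transform of `f` with window `φ`:
`V_φ f(x,ξ) = (2π)^{−d/2} ∫ f(y) conj(φ(y−x)) e^{−i⟨y,ξ⟩} dy`. -/
noncomputable def STFT {d : ℕ} (φ f : EuclideanSpace ℝ (Fin d) → ℂ)
    (x ξ : EuclideanSpace ℝ (Fin d)) : ℂ :=
  (((2 * Real.pi) ^ (-(d : ℝ) / 2) : ℝ) : ℂ) *
    ∫ y, f y * (starRingEnd ℂ) (φ (y - x)) *
      Complex.exp (-(Complex.I * (⟪y, ξ⟫ : ℝ)))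

lemma aux_rpow_add_le {q a b : ℝ} (hq : 0 ≤ q) (ha : 0 ≤ a) (hb : 0 ≤ b) :
    (a + b) ^ q ≤ 2 ^ q * (a ^ q + b ^ q) := by
  have h1 : a + b ≤ 2 * max a b := by
    rcases max_cases a b with ⟨h, _⟩ | ⟨h, _⟩ <;> rw [h] <;> linarith
  calc (a + b) ^ q ≤ (2 * max a b) ^ q :=
        Real.rpow_le_rpow (by linarith) h1 hq
    _ = 2 ^ q * (max a b) ^ q := Real.mul_rpow (by norm_num) (le_max_iff.2 (Or.inl ha))
    _ ≤ 2 ^ q * (a ^ q + b ^ q) := by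
        gcongr
        rcases max_cases a b with ⟨h, _⟩ | ⟨h, _⟩ <;> rw [h]
        · exact le_add_of_nonneg_right (Real.rpow_nonneg hb q)
        · exact le_add_of_nonneg_left (Real.rpow_nonneg ha q)

lemma aux_log_sq_bound {q K a : ℝ} (hq : 1 ≤ q) (hK : 0 ≤ K) (ha : 0 ≤ a) :
    ∃ M : ℝ, ∀ t : ℝ, 0 ≤ t → K * Real.log (1 + a * t) ^ q ≤ t ^ 2 + M := by
  have hq0 : 0 < q := lt_of_lt_of_le one_pos hq
  set A := Real.log (1 + a) with hA
  have hA0 : 0 ≤ A := Real.log_nonneg (by linarith)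
  set C1 := K * 2 ^ q * (q ^ q) with hC1
  have hC10 : 0 ≤ C1 := by positivity
  refine ⟨K * 2 ^ q * A ^ q + C1 + C1 ^ 2, fun t ht => ?_⟩
  have h1t : (0:ℝ) < 1 + t := by linarith
  have hlog1 : Real.log (1 + a * t) ≤ A + Real.log (1 + t) := by
    calc Real.log (1 + a * t) ≤ Real.log ((1 + a) * (1 + t)) :=
          Real.log_le_log (by positivity) (by nlinarith)
      _ = A + Real.log (1 + t) := Real.log_mul (by positivity) (by positivity)
  have hlog2 : Real.log (1 + t) ≤ q * (1 + t) ^ (1 / q) := by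
    have h := Real.log_rpow h1t (1 / q)
    have h2 : Real.log ((1 + t) ^ (1 / q : ℝ)) ≤ (1 + t) ^ (1 / q : ℝ) := by
      have := Real.log_le_sub_one_of_pos (x := (1 + t) ^ (1 / q : ℝ)) (by positivity)
      linarith
    calc Real.log (1 + t) = q * Real.log ((1 + t) ^ (1 / q : ℝ)) := by
          rw [h]; field_simp
      _ ≤ q * (1 + t) ^ (1 / q) := by nlinarith
  have hlogpos : 0 ≤ Real.log (1 + a * t) := Real.log_nonneg (by nlinarith)
  have step : Real.log (1 + a * t) ^ q ≤ 2 ^ q * (A ^ q + q ^ q * (1 + t)) := by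
    calc Real.log (1 + a * t) ^ q ≤ (A + q * (1 + t) ^ (1 / q)) ^ q :=
          Real.rpow_le_rpow hlogpos (by linarith) (le_of_lt hq0)
      _ ≤ 2 ^ q * (A ^ q + (q * (1 + t) ^ (1 / q)) ^ q) :=
          aux_rpow_add_le (le_of_lt hq0) hA0 (by positivity)
      _ = 2 ^ q * (A ^ q + q ^ q * (1 + t)) := by
          rw [Real.mul_rpow (le_of_lt hq0) (by positivity),
            ← Real.rpow_mul h1t.le, one_div,
            inv_mul_cancel₀ (ne_of_gt hq0), Real.rpow_one]
  have : K * Real.log (1 + a * t) ^ q ≤ K * 2 ^ q * A ^ q + C1 * (1 + t) := by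
    calc K * Real.log (1 + a * t) ^ q ≤ K * (2 ^ q * (A ^ q + q ^ q * (1 + t))) := by
          apply mul_le_mul_of_nonneg_left step hK
      _ = K * 2 ^ q * A ^ q + C1 * (1 + t) := by rw [hC1]; ring
  nlinarith [sq_nonneg (t - C1), sq_nonneg t]

lemma gauss_integrable (d : ℕ) :
    Integrable (fun w : EuclideanSpace ℝ (Fin d) => Real.exp (-‖w‖ ^ 2)) := by
  have h := (GaussianFourier.integrable_cexp_neg_mul_sq_norm_add
    (V := EuclideanSpace ℝ (Fin d)) (b := 1) (by norm_num) 0 0).norm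
  apply h.congr
  filter_upwards with v
  simp [Complex.norm_exp]
  norm_cast

lemma gauss_integral_pos (d : ℕ) :
    0 < ∫ w : EuclideanSpace ℝ (Fin d), Real.exp (-‖w‖ ^ 2) := by
  have h : ∫ w : EuclideanSpace ℝ (Fin d), Real.exp (-1 * ‖w‖ ^ 2)
      = (Real.pi / 1) ^ ((Module.finrank ℝ (EuclideanSpace ℝ (Fin d))) / 2 : ℝ) :=
    GaussianFourier.integral_rexp_neg_mul_sq_norm one_pos
  simp only [neg_one_mul] at h
  rw [h]
  positivity

lemma norm_phi (d : ℕ) (φ : EuclideanSpace ℝ (Fin d) → ℂ)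
    (hφ : φ = fun x => ((Real.pi ^ (-(d : ℝ) / 4) : ℝ) : ℂ) *
      Complex.exp (-((‖x‖ : ℂ) ^ 2) / 2)) (x : EuclideanSpace ℝ (Fin d)) :
    ‖φ x‖ = Real.pi ^ (-(d : ℝ) / 4) * Real.exp (-‖x‖ ^ 2 / 2) := by
  rw [hφ]
  simp only [norm_mul, Complex.norm_real, Real.norm_eq_abs,
    Complex.norm_exp]
  rw [_root_.abs_of_nonneg (by positivity : (0:ℝ) ≤ Real.pi ^ (-(d:ℝ)/4))]
  congr 1
  have : (-((‖x‖ : ℂ) ^ 2) / 2) = (((-‖x‖ ^ 2 / 2 : ℝ)) : ℂ) := by push_cast; ring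
  rw [this, Complex.ofReal_re]

lemma fourier_eq_stft {d : ℕ} (φ : EuclideanSpace ℝ (Fin d) → ℂ)
    (f : EuclideanSpace ℝ (Fin d) → ℂ) (x w : EuclideanSpace ℝ (Fin d)) :
    𝓕 (fun v => f v * (starRingEnd ℂ) (φ (v - x))) w
      = (((2 * Real.pi) ^ ((d : ℝ) / 2) : ℝ) : ℂ) *
        STFT φ f x ((2 * Real.pi) • w) := by
  rw [Real.fourier_eq', STFT, ← mul_assoc]
  have h1 : (((2 * Real.pi) ^ ((d : ℝ) / 2) : ℝ) : ℂ) *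
      (((2 * Real.pi) ^ (-(d : ℝ) / 2) : ℝ) : ℂ) = 1 := by
    rw [← Complex.ofReal_mul, ← Real.rpow_add (by positivity)]
    norm_num
    rw [show (d:ℝ)/2 + -(d:ℝ)/2 = 0 by ring, Real.rpow_zero]
  rw [h1, one_mul]
  congr 1
  ext v
  rw [real_inner_smul_right]
  rw [smul_eq_mul, mul_comm]
  congr 1
  push_cast
  ring

set_option maxHeartbeats 2000000 in
/-- Sub-critical case `0 ≤ s < 1/2`: a Gaussian-weighted bound on the
short-time Fourier transform of `f` (with Gaussian window and weight
`e^{r(log(1+|(x,ξ)|))^q}`, `q = 1/(1−2s)`) yields a Gaussian-weighted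
pointwise bound on `f`, with a dilated weight parameter `c·r`. -/
theorem pointwise_bound_of_stft_bound_log
    (d : ℕ) (hd : 1 ≤ d) (s : ℝ) (hs0 : 0 ≤ s) (hs : s < 1 / 2)
    (q : ℝ) (hq : q = 1 / (1 - 2 * s))
    (φ : EuclideanSpace ℝ (Fin d) → ℂ)
    (hφ : φ = fun x => ((Real.pi ^ (-(d : ℝ) / 4) : ℝ) : ℂ) *
      Complex.exp (-((‖x‖ : ℂ) ^ 2) / 2)) :
    ∃ c : ℝ, 0 < c ∧ ∀ r : ℝ, 0 < r → ∃ C : ℝ, 0 < C ∧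
      ∀ f : SchwartzMap (EuclideanSpace ℝ (Fin d)) ℂ,
      ∀ B : ℝ, 0 ≤ B →
        (∀ x ξ : EuclideanSpace ℝ (Fin d), ‖STFT φ (⇑f) x ξ‖ ≤
          B * Real.exp (-(‖x‖ ^ 2 + ‖ξ‖ ^ 2) / 4) *
            Real.exp (r * Real.log (1 + (‖x‖ ^ 2 + ‖ξ‖ ^ 2) ^ ((1 : ℝ) / 2)) ^ q)) →
        ∀ x : EuclideanSpace ℝ (Fin d), ‖f x‖ ≤
          C * B * Real.exp (-‖x‖ ^ 2 / 2) *
            Real.exp (c * r * Real.log (1 + ‖x‖) ^ q) := by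
  have hq1 : 1 ≤ q := by
    rw [hq, le_div_iff₀ (by linarith)]; linarith
  have hq0 : 0 < q := lt_of_lt_of_le one_pos hq1
  refine ⟨2 ^ q * 2 ^ q, by positivity, fun r hr => ?_⟩
  obtain ⟨M, hM⟩ := aux_log_sq_bound (q := q) (K := 2 ^ q * r) (a := 2 * Real.pi)
    hq1 (by positivity) (by positivity)
  set J := ∫ w : EuclideanSpace ℝ (Fin d), Real.exp (-‖w‖ ^ 2) with hJdef
  have hJ : 0 < J := gauss_integral_pos d
  set Ct := 2 ^ q * 2 ^ q * r * (Real.log 2) ^ q + M with hCt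
  refine ⟨Real.pi ^ ((d : ℝ)/4) * (2 * Real.pi) ^ ((d : ℝ)/2) * J * Real.exp Ct,
    by positivity, fun f B hB hbound y => ?_⟩
  set u := ‖y‖ with hu
  have hu0 : 0 ≤ u := norm_nonneg y
  set K := (2 * Real.pi) ^ ((d : ℝ)/2) * B *
    Real.exp (-u ^ 2 + Ct + 2 ^ q * 2 ^ q * r * Real.log (1 + u) ^ q) with hK
  have hK0 : 0 ≤ K := by positivity
  set g : EuclideanSpace ℝ (Fin d) → ℂ :=
    fun v => f v * (starRingEnd ℂ) (φ (v - (2:ℝ) • y)) with hg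
  have hφc : Continuous φ := by
    rw [hφ]
    exact continuous_const.mul (Complex.continuous_exp.comp
      ((((Complex.continuous_ofReal.comp continuous_norm).pow 2).neg).div_const 2))
  have hsub : Continuous fun v : EuclideanSpace ℝ (Fin d) => v - (2:ℝ) • y :=
    continuous_id.sub continuous_const
  have hgc : Continuous g := by
    apply f.continuous.mul
    exact Complex.continuous_conj.comp (hφc.comp hsub)
  have hgint : Integrable g := by
    have h1 : Integrable (fun v => (starRingEnd ℂ) (φ (v - (2:ℝ) • y)) * f v) := by
      apply Integrable.bdd_mul (c := Real.pi ^ (-(d:ℝ)/4)) (f.integrable (μ := volume))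
      · exact (Complex.continuous_conj.comp (hφc.comp hsub)).aestronglyMeasurable
      · refine ae_of_all _ fun v => ?_
        rw [RCLike.norm_conj, norm_phi d φ hφ]
        have h2 : Real.exp (-‖v - (2:ℝ) • y‖ ^ 2 / 2) ≤ 1 := by
          apply Real.exp_le_one_iff.2
          have := sq_nonneg ‖v - (2:ℝ) • y‖
          linarith
        calc Real.pi ^ (-(d:ℝ)/4) * Real.exp (-‖v - (2:ℝ) • y‖ ^ 2 / 2)
            ≤ Real.pi ^ (-(d:ℝ)/4) * 1 :=
              mul_le_mul_of_nonneg_left h2 (by positivity)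
          _ = Real.pi ^ (-(d:ℝ)/4) := mul_one _
    exact h1.congr (ae_of_all _ fun v => mul_comm _ _)
  -- key pointwise bound for the Fourier transform of g
  have hkey : ∀ w, ‖𝓕 g w‖ ≤ K * Real.exp (-‖w‖ ^ 2) := by
    intro w
    rw [hg, fourier_eq_stft φ (⇑f) ((2:ℝ) • y) w]
    set t := ‖w‖ with ht
    have ht0 : 0 ≤ t := norm_nonneg w
    rw [norm_mul, Complex.norm_real, Real.norm_eq_abs,
      _root_.abs_of_nonneg (by positivity : (0:ℝ) ≤ (2*Real.pi) ^ ((d:ℝ)/2))]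
    have hny : ‖(2:ℝ) • y‖ = 2 * u := by
      rw [norm_smul, Real.norm_eq_abs, _root_.abs_of_nonneg (by norm_num : (0:ℝ) ≤ 2)]
    have hnw : ‖(2 * Real.pi) • w‖ = 2 * Real.pi * t := by
      rw [norm_smul, Real.norm_eq_abs, _root_.abs_of_nonneg (by positivity : (0:ℝ) ≤ 2*Real.pi)]
    have hb := hbound ((2:ℝ) • y) ((2 * Real.pi) • w)
    rw [hny, hnw] at hb
    have hpi := Real.pi_gt_three
    -- real-exponent estimates
    set S := ((2*u) ^ 2 + (2*Real.pi*t) ^ 2 : ℝ) with hS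
    have hS0 : (0:ℝ) ≤ S := by positivity
    have hSle : S ^ ((1:ℝ)/2) ≤ 2*u + 2*Real.pi*t := by
      rw [← Real.sqrt_eq_rpow]
      calc Real.sqrt S ≤ Real.sqrt ((2*u + 2*Real.pi*t) ^ 2) :=
            Real.sqrt_le_sqrt (by nlinarith [mul_nonneg hu0 ht0])
        _ = 2*u + 2*Real.pi*t := Real.sqrt_sq (by positivity)
    have hSr0 : (0:ℝ) ≤ S ^ ((1:ℝ)/2) := Real.rpow_nonneg hS0 _
    have hL0 : 0 ≤ Real.log (1 + S ^ ((1:ℝ)/2)) := Real.log_nonneg (by linarith)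
    have hL1 : Real.log (1 + S ^ ((1:ℝ)/2)) ≤
        (Real.log 2 + Real.log (1 + u)) + Real.log (1 + 2*Real.pi*t) := by
      calc Real.log (1 + S ^ ((1:ℝ)/2)) ≤ Real.log ((2*(1+u)) * (1 + 2*Real.pi*t)) := by
            apply Real.log_le_log (by positivity)
            nlinarith [mul_nonneg hu0 ht0]
        _ = (Real.log 2 + Real.log (1 + u)) + Real.log (1 + 2*Real.pi*t) := by
            rw [Real.log_mul (by positivity) (by positivity),
              Real.log_mul (by norm_num) (by positivity)]
    have hlu0 : 0 ≤ Real.log (1 + u) := Real.log_nonneg (by linarith)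
    have hlt0 : 0 ≤ Real.log (1 + 2*Real.pi*t) := Real.log_nonneg (by nlinarith)
    have hl20 : 0 ≤ Real.log 2 := Real.log_nonneg (by norm_num)
    have hLq : Real.log (1 + S ^ ((1:ℝ)/2)) ^ q ≤
        2 ^ q * (2 ^ q * ((Real.log 2) ^ q + Real.log (1 + u) ^ q)
          + Real.log (1 + 2*Real.pi*t) ^ q) := by
      calc Real.log (1 + S ^ ((1:ℝ)/2)) ^ q
          ≤ ((Real.log 2 + Real.log (1 + u)) + Real.log (1 + 2*Real.pi*t)) ^ q :=
            Real.rpow_le_rpow hL0 hL1 hq0.le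
        _ ≤ 2 ^ q * ((Real.log 2 + Real.log (1 + u)) ^ q
              + Real.log (1 + 2*Real.pi*t) ^ q) :=
            aux_rpow_add_le hq0.le (by linarith) hlt0
        _ ≤ 2 ^ q * (2 ^ q * ((Real.log 2) ^ q + Real.log (1 + u) ^ q)
              + Real.log (1 + 2*Real.pi*t) ^ q) := by
            gcongr
            exact aux_rpow_add_le hq0.le hl20 hlu0
    have hMt : 2 ^ q * r * Real.log (1 + 2*Real.pi*t) ^ q ≤ t ^ 2 + M := by
      have := hM t ht0
      have harg : (2*Real.pi) * t = 2*Real.pi*t := by ring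
      rw [harg] at this
      exact this
    have hExp : -S / 4
        + r * Real.log (1 + S ^ ((1:ℝ)/2)) ^ q
        ≤ (-u ^ 2 + Ct + 2 ^ q * 2 ^ q * r * Real.log (1 + u) ^ q) + -t ^ 2 := by
      have h2 : r * Real.log (1 + S ^ ((1:ℝ)/2)) ^ q ≤
          2 ^ q * 2 ^ q * r * (Real.log 2) ^ q
          + 2 ^ q * 2 ^ q * r * Real.log (1 + u) ^ q
          + 2 ^ q * r * Real.log (1 + 2*Real.pi*t) ^ q := by
        have := mul_le_mul_of_nonneg_left hLq hr.le
        nlinarith [this]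
      have h3 : -S / 4 = -u ^ 2 - Real.pi ^ 2 * t ^ 2 := by
        rw [hS]; ring
      have h9 : (9:ℝ) ≤ Real.pi ^ 2 := by nlinarith [hpi]
      have h4 : 2 * t ^ 2 ≤ Real.pi ^ 2 * t ^ 2 := by
        nlinarith [sq_nonneg t, mul_le_mul_of_nonneg_right h9 (sq_nonneg t)]
      rw [hCt, h3]
      linarith
    have hfac : B * Real.exp (-S / 4) * Real.exp (r * Real.log (1 + S ^ ((1:ℝ)/2)) ^ q)
        ≤ B * Real.exp ((-u ^ 2 + Ct + 2 ^ q * 2 ^ q * r * Real.log (1 + u) ^ q) + -t ^ 2) := by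
      rw [mul_assoc, ← Real.exp_add]
      exact mul_le_mul_of_nonneg_left (Real.exp_le_exp.2 hExp) hB
    calc (2*Real.pi) ^ ((d:ℝ)/2) * ‖STFT φ (⇑f) ((2:ℝ) • y) ((2*Real.pi) • w)‖
        ≤ (2*Real.pi) ^ ((d:ℝ)/2) *
          (B * Real.exp (-S / 4) *
            Real.exp (r * Real.log (1 + S ^ ((1:ℝ)/2)) ^ q)) :=
          mul_le_mul_of_nonneg_left hb (by positivity)
      _ ≤ (2*Real.pi) ^ ((d:ℝ)/2) *
          (B * Real.exp ((-u ^ 2 + Ct + 2 ^ q * 2 ^ q * r * Real.log (1 + u) ^ q) + -t ^ 2)) :=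
          mul_le_mul_of_nonneg_left hfac (by positivity)
      _ = K * Real.exp (-t ^ 2) := by
          rw [hK, Real.exp_add]; ring
  -- integrability of the Fourier transform, inversion
  have hFgc : Continuous (𝓕 g) :=
    VectorFourier.fourierIntegral_continuous Real.continuous_fourierChar
      (by exact continuous_inner) hgint
  have hFgint : Integrable (𝓕 g) :=
    Integrable.mono' ((gauss_integrable d).const_mul K)
      hFgc.aestronglyMeasurable (ae_of_all _ hkey)
  have hinv : g y = 𝓕⁻ (𝓕 g) y :=
    (hgint.fourierInv_fourier_eq hFgint hgc.continuousAt).symm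
  have hgy : ‖g y‖ ≤ K * J := by
    rw [hinv]
    calc ‖𝓕⁻ (𝓕 g) y‖ ≤ ∫ w, ‖𝓕 g w‖ :=
          VectorFourier.norm_fourierIntegral_le_integral_norm _ _ _ _ _
      _ ≤ ∫ w : EuclideanSpace ℝ (Fin d), K * Real.exp (-‖w‖ ^ 2) :=
          integral_mono hFgint.norm ((gauss_integrable d).const_mul K) hkey
      _ = K * J := by rw [hJdef, integral_const_mul]
  -- from ‖g y‖ back to ‖f y‖
  have hyy : y - (2:ℝ) • y = -y := by
    rw [two_smul]; abel
  have hgy_eq : ‖g y‖ = ‖f y‖ * (Real.pi ^ (-(d:ℝ)/4) * Real.exp (-u ^ 2 / 2)) := by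
    rw [hg]
    simp only [norm_mul, RCLike.norm_conj, hyy, norm_phi d φ hφ, norm_neg]
    rw [hu]
  have hpos : (0:ℝ) < Real.pi ^ (-(d:ℝ)/4) * Real.exp (-u ^ 2 / 2) := by positivity
  have h1 : ‖f y‖ * (Real.pi ^ (-(d:ℝ)/4) * Real.exp (-u ^ 2 / 2)) ≤ K * J := by
    rw [← hgy_eq]; exact hgy
  have hone : (Real.pi ^ (-(d:ℝ)/4) * Real.exp (-u ^ 2 / 2)) *
      (Real.pi ^ ((d:ℝ)/4) * Real.exp (u ^ 2 / 2)) = 1 := by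
    rw [mul_mul_mul_comm, ← Real.rpow_add Real.pi_pos, ← Real.exp_add,
      show (-(d:ℝ)/4 + (d:ℝ)/4) = 0 by ring, Real.rpow_zero,
      show (-u ^ 2/2 + u ^ 2/2 : ℝ) = 0 by ring, Real.exp_zero, mul_one]
  have hfy : ‖f y‖ ≤ K * J * (Real.pi ^ ((d:ℝ)/4) * Real.exp (u ^ 2 / 2)) := by
    have := mul_le_mul_of_nonneg_right h1 (le_of_lt (by positivity :
      (0:ℝ) < Real.pi ^ ((d:ℝ)/4) * Real.exp (u ^ 2 / 2)))
    rw [mul_assoc, hone, mul_one] at this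
    exact this
  refine hfy.trans (le_of_eq ?_)
  rw [hK]
  have hexp : Real.exp (-u ^ 2 + Ct + 2 ^ q * 2 ^ q * r * Real.log (1 + u) ^ q) *
      Real.exp (u ^ 2 / 2) = Real.exp Ct * (Real.exp (-u ^ 2 / 2) *
        Real.exp (2 ^ q * 2 ^ q * r * Real.log (1 + u) ^ q)) := by
    rw [← Real.exp_add, ← Real.exp_add, ← Real.exp_add]
    congr 1
    ring
  linear_combination ((2*Real.pi) ^ ((d:ℝ)/2) * B * J * Real.pi ^ ((d:ℝ)/4)) * hexp
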